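/- arXiv:2511.09542 — 2 statements merged into one kernel-verified Lean document; each statement's English description precedes it below -/
import Mathlib

section
/- Let M ∈ ℝ^{P1×P2} have rank R with compact SVD M = UΣV^T and smallest nonzero singular value λ_min > 0. If M̂ satisfies ∥M̂ − M∥_F ≤ λ_min/8, then the best rank-R approximation SVD_R(M̂) of M̂ in Frobenius norm satisfies SVD_R(M̂) − M = Z − U_⊥ U_⊥^T Z V_⊥ V_⊥^T + Rem, where Z = M̂ − M, U_⊥ (resp. V_⊥) is an orthonormal basis of the orthogonal complement of the column span of U (resp. V), and ∥Rem∥_F ≤ 40 ∥M̂ − M∥_F² / λ_min. -/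
open Matrix

attribute [local instance] Matrix.frobeniusSeminormedAddCommGroup
attribute [local instance] Matrix.frobeniusNormedAddCommGroup

namespace FrobAux

variable {m n p q : Type*} [Fintype m] [Fintype n] [Fintype p] [Fintype q]

noncomputable def fno (A : Matrix m n ℝ) : ℝ := Real.sqrt (∑ i, ∑ j, (A i j) ^ 2)

def fsq (A : Matrix m n ℝ) : ℝ := ∑ i, ∑ j, (A i j) ^ 2

lemma fsq_nonneg (A : Matrix m n ℝ) : 0 ≤ fsq A :=
  Finset.sum_nonneg fun _ _ => Finset.sum_nonneg fun _ _ => sq_nonneg _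

lemma fno_eq_sqrt (A : Matrix m n ℝ) : fno A = Real.sqrt (fsq A) := rfl

lemma fno_nonneg (A : Matrix m n ℝ) : 0 ≤ fno A := Real.sqrt_nonneg _

lemma fno_sq (A : Matrix m n ℝ) : fno A ^ 2 = fsq A := Real.sq_sqrt (fsq_nonneg A)

lemma fno_eq_norm (A : Matrix m n ℝ) : fno A = ‖A‖ := by
  rw [Matrix.frobenius_norm_def, fno_eq_sqrt, Real.sqrt_eq_rpow]
  congr 1
  · simp [fsq, Real.rpow_two, Real.norm_eq_abs, sq_abs]

lemma fno_zero : fno (0 : Matrix m n ℝ) = 0 := by simp [fno_eq_norm]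

lemma fno_eq_zero {A : Matrix m n ℝ} (h : fno A = 0) : A = 0 := by
  rw [fno_eq_norm] at h; exact norm_eq_zero.mp h

lemma fno_neg (A : Matrix m n ℝ) : fno (-A) = fno A := by simp [fno_eq_norm]

lemma fno_sub_comm (A B : Matrix m n ℝ) : fno (A - B) = fno (B - A) := by
  rw [← fno_neg (A - B)]; congr 1; abel

lemma fno_add_le (A B : Matrix m n ℝ) : fno (A + B) ≤ fno A + fno B := by
  simp only [fno_eq_norm]; exact norm_add_le _ _

lemma fno_mul_le (A : Matrix m n ℝ) (B : Matrix n p ℝ) : fno (A * B) ≤ fno A * fno B := by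
  simp only [fno_eq_norm]; exact Matrix.frobenius_norm_mul A B

lemma fno_transpose (A : Matrix m n ℝ) : fno Aᵀ = fno A := by
  simp only [fno_eq_norm]; exact Matrix.frobenius_norm_transpose A

lemma fno_smul (c : ℝ) (A : Matrix m n ℝ) : fno (c • A) = |c| * fno A := by
  rw [fno_eq_sqrt, fno_eq_sqrt, ← Real.sqrt_sq_eq_abs, ← Real.sqrt_mul (sq_nonneg c)]
  congr 1
  simp only [fsq, Matrix.smul_apply, smul_eq_mul, mul_pow, Finset.mul_sum]

lemma fsq_eq_trace (A : Matrix m n ℝ) : fsq A = Matrix.trace (Aᵀ * A) := by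
  simp only [Matrix.trace, Matrix.diag, Matrix.mul_apply, Matrix.transpose_apply, fsq]
  rw [Finset.sum_comm]
  simp [sq]

lemma fno_mono {A : Matrix m n ℝ} {B : Matrix p q ℝ} (h : fsq A ≤ fsq B) : fno A ≤ fno B :=
  Real.sqrt_le_sqrt h

end FrobAux

namespace FrobAux
variable {m n p q : Type*} [Fintype m] [Fintype n] [Fintype p] [Fintype q]

lemma iso_left [DecidableEq n] (X : Matrix m n ℝ) (A : Matrix n p ℝ) (h : Xᵀ * X = 1) :
    fno (X * A) = fno A := by
  rw [fno_eq_sqrt, fno_eq_sqrt]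
  congr 1
  rw [fsq_eq_trace, fsq_eq_trace, Matrix.transpose_mul]
  have : Aᵀ * Xᵀ * (X * A) = Aᵀ * A := by
    rw [Matrix.mul_assoc, ← Matrix.mul_assoc Xᵀ X A, h, Matrix.one_mul]
  rw [this]

lemma iso_right [DecidableEq n] (X : Matrix m n ℝ) (A : Matrix p n ℝ) (h : Xᵀ * X = 1) :
    fno (A * Xᵀ) = fno A := by
  rw [← fno_transpose (A * Xᵀ), Matrix.transpose_mul, Matrix.transpose_transpose,
    iso_left X Aᵀ h, fno_transpose]

lemma contract_left [DecidableEq m] (H : Matrix m m ℝ) (A : Matrix m p ℝ)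
    (hsym : Hᵀ = H) (hid : H * H = H) : fno (H * A) ≤ fno A := by
  apply fno_mono
  have key : fsq A = fsq (H * A) + fsq ((1 - H) * A) := by
    rw [fsq_eq_trace, fsq_eq_trace, fsq_eq_trace]
    have e1 : (H * A)ᵀ * (H * A) = Aᵀ * (H * A) := by
      rw [Matrix.transpose_mul, hsym, Matrix.mul_assoc, ← Matrix.mul_assoc H H A, hid]
    have e2 : ((1 - H) * A)ᵀ * ((1 - H) * A) = Aᵀ * A - Aᵀ * (H * A) := by
      have hsym' : (1 - H)ᵀ = 1 - H := by rw [Matrix.transpose_sub, Matrix.transpose_one, hsym]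
      have hid' : (1 - H) * (1 - H) = 1 - H := by
        rw [Matrix.sub_mul, Matrix.mul_sub, Matrix.mul_sub, hid]
        simp only [Matrix.one_mul, Matrix.mul_one]
        abel
      rw [Matrix.transpose_mul, hsym', Matrix.mul_assoc, ← Matrix.mul_assoc (1-H) (1-H) A, hid']
      rw [Matrix.sub_mul, Matrix.one_mul, Matrix.mul_sub]
    rw [e1, e2, Matrix.trace_sub]
    ring
  have := fsq_nonneg ((1 - H) * A)
  linarith

lemma contract_right [DecidableEq m] (H : Matrix m m ℝ) (A : Matrix p m ℝ)
    (hsym : Hᵀ = H) (hid : H * H = H) : fno (A * H) ≤ fno A := by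
  rw [← fno_transpose (A * H), Matrix.transpose_mul, hsym, ← fno_transpose A]
  exact contract_left H Aᵀ hsym hid

lemma diag_right [DecidableEq n] (A : Matrix m n ℝ) (d : n → ℝ) {c : ℝ} (hc : 0 ≤ c)
    (h : ∀ j, c ≤ d j) : c * fno A ≤ fno (A * Matrix.diagonal d) := by
  have h1 : c * fno A = Real.sqrt (c ^ 2 * fsq A) := by
    rw [Real.sqrt_mul (sq_nonneg c), Real.sqrt_sq hc, fno_eq_sqrt]
  rw [h1, fno_eq_sqrt]
  apply Real.sqrt_le_sqrt
  simp only [fsq, Matrix.mul_diagonal, Finset.mul_sum]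
  apply Finset.sum_le_sum
  intro i _
  apply Finset.sum_le_sum
  intro j _
  have hd : 0 ≤ d j := le_trans hc (h j)
  calc c ^ 2 * A i j ^ 2 ≤ (d j) ^ 2 * A i j ^ 2 := by
        apply mul_le_mul_of_nonneg_right _ (sq_nonneg _)
        exact pow_le_pow_left₀ hc (h j) 2
    _ = (A i j * d j) ^ 2 := by ring

lemma diag_left [DecidableEq m] (A : Matrix m n ℝ) (d : m → ℝ) {c : ℝ} (hc : 0 ≤ c)
    (h : ∀ j, c ≤ d j) : c * fno A ≤ fno (Matrix.diagonal d * A) := by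
  rw [← fno_transpose A, ← fno_transpose (Matrix.diagonal d * A), Matrix.transpose_mul,
    Matrix.diagonal_transpose]
  exact diag_right Aᵀ d hc h

lemma pyth (A C : Matrix m n ℝ) (h : Matrix.trace (Aᵀ * C) = 0) :
    fsq (A + C) = fsq A + fsq C := by
  rw [fsq_eq_trace, fsq_eq_trace, fsq_eq_trace, Matrix.transpose_add]
  rw [Matrix.add_mul, Matrix.mul_add, Matrix.mul_add, Matrix.trace_add, Matrix.trace_add,
    Matrix.trace_add]
  have h2 : Matrix.trace (Cᵀ * A) = 0 := by
    have : Cᵀ * A = (Aᵀ * C)ᵀ := by rw [Matrix.transpose_mul, Matrix.transpose_transpose]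
    rw [this, Matrix.trace_transpose, h]
  rw [h, h2]
  ring

end FrobAux

namespace FrobAux

theorem exists_rsvd {P1 P2 : ℕ} (B : Matrix (Fin P1) (Fin P2) ℝ) :
    ∃ (r : ℕ) (W : Matrix (Fin P1) (Fin r) ℝ) (X : Matrix (Fin P2) (Fin r) ℝ) (γ : Fin r → ℝ),
      Wᵀ * W = 1 ∧ Xᵀ * X = 1 ∧ B = W * Matrix.diagonal γ * Xᵀ ∧ (∀ i, 0 < γ i) ∧
      (r : ℕ) ≤ B.rank := by
  classical
  set G := Bᵀ * B with hGdef
  have hBHT : Bᴴ = Bᵀ := Matrix.conjTranspose_eq_transpose_of_trivial B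
  have hPSD : G.PosSemidef := by
    have := Matrix.posSemidef_conjTranspose_mul_self B
    rwa [hBHT] at this
  have hG : G.IsHermitian := hPSD.isHermitian
  set S : Matrix (Fin P2) (Fin P2) ℝ := (Matrix.IsHermitian.eigenvectorUnitary hG : Matrix (Fin P2) (Fin P2) ℝ) with hSdef
  set μ : Fin P2 → ℝ := hG.eigenvalues with hμdef
  have hstarS : star S = Sᵀ := by
    rw [Matrix.star_eq_conjTranspose, Matrix.conjTranspose_eq_transpose_of_trivial]
  have spec : G = S * Matrix.diagonal μ * Sᵀ := by
    have := hG.spectral_theorem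
    rw [Unitary.conjStarAlgAut_apply, ← hSdef, hstarS] at this
    simpa [RCLike.ofReal_real_eq_id] using this
  have hS1 : Sᵀ * S = 1 := by
    have := (Matrix.IsHermitian.eigenvectorUnitary hG).2
    rw [Matrix.mem_unitaryGroup_iff'] at this
    rwa [hstarS] at this
  have hμnonneg : ∀ i, 0 ≤ μ i := fun i => hPSD.eigenvalues_nonneg i
  set X0 : Matrix (Fin P2) {j : Fin P2 // μ j ≠ 0} ℝ :=
    Matrix.of (fun p i => S p i.val) with hX0def
  set N : Matrix (Fin P2) {j : Fin P2 // ¬ μ j ≠ 0} ℝ :=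
    Matrix.of (fun p i => S p i.val) with hNdef
  -- entrywise facts from Sᵀ * S = 1
  have entry : ∀ a b : Fin P2, (∑ p, S p a * S p b) = if a = b then (1:ℝ) else 0 := by
    intro a b
    have := congrFun (congrFun hS1 a) b
    simpa [Matrix.mul_apply, Matrix.transpose_apply, Matrix.one_apply] using this
  have hX0 : X0ᵀ * X0 = 1 := by
    ext i j
    simp only [Matrix.mul_apply, Matrix.transpose_apply, hX0def, Matrix.of_apply,
      Matrix.one_apply]
    rw [entry i.val j.val]
    simp [Subtype.ext_iff]
  have hN : Nᵀ * N = 1 := by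
    ext i j
    simp only [Matrix.mul_apply, Matrix.transpose_apply, hNdef, Matrix.of_apply,
      Matrix.one_apply]
    rw [entry i.val j.val]
    simp [Subtype.ext_iff]
  have hXN : X0ᵀ * N = 0 := by
    ext i j
    simp only [Matrix.mul_apply, Matrix.transpose_apply, hX0def, hNdef, Matrix.of_apply,
      Matrix.zero_apply]
    rw [entry i.val j.val]
    have : i.val ≠ j.val := by
      intro h
      exact j.2 (h ▸ i.2)
    simp [this]
  have hNX : Nᵀ * X0 = 0 := by
    have : Nᵀ * X0 = (X0ᵀ * N)ᵀ := by
      rw [Matrix.transpose_mul, Matrix.transpose_transpose]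
    rw [this, hXN, Matrix.transpose_zero]
  have hcomplete : X0 * X0ᵀ + N * Nᵀ = 1 := by
    have h1 : Matrix.fromRows X0ᵀ Nᵀ * Matrix.fromCols X0 N = 1 := by
      rw [Matrix.fromRows_mul_fromCols, hX0, hN, hXN, hNX, ← Matrix.fromBlocks_one]
    have h2 := (Matrix.equiv_compl_fromCols_mul_fromRows_eq_one_comm
      (fun j : Fin P2 => μ j ≠ 0) X0 N X0ᵀ Nᵀ).mpr h1
    rw [Matrix.fromCols_mul_fromRows] at h2
    exact h2
  have hGS : G * S = S * Matrix.diagonal μ := by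
    calc G * S = S * Matrix.diagonal μ * (Sᵀ * S) := by
          rw [spec]; simp [Matrix.mul_assoc]
      _ = S * Matrix.diagonal μ := by rw [hS1, Matrix.mul_one]
  have hGX : G * X0 = X0 * Matrix.diagonal (fun i : {j : Fin P2 // μ j ≠ 0} => μ i.val) := by
    ext p i
    have h1 : (G * X0) p i = (G * S) p i.val := by
      simp [Matrix.mul_apply, hX0def]
    rw [h1, hGS, Matrix.mul_diagonal, Matrix.mul_diagonal]
    simp [hX0def]
  have hGN0 : G * N = 0 := by
    have key : Matrix.diagonal μ * (Sᵀ * N) = 0 := by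
      ext q i
      simp only [Matrix.diagonal_mul, Matrix.zero_apply]
      have h2 : (Sᵀ * N) q i = if q = i.val then (1:ℝ) else 0 := by
        simp only [Matrix.mul_apply, Matrix.transpose_apply, hNdef, Matrix.of_apply]
        exact entry q i.val
      rw [h2]
      by_cases h : q = i.val
      · rw [if_pos h, mul_one, h]
        exact not_not.mp i.2
      · simp [h]
    calc G * N = S * (Matrix.diagonal μ * (Sᵀ * N)) := by
          rw [spec]; simp [Matrix.mul_assoc]
      _ = 0 := by rw [key, Matrix.mul_zero]
  have hBN : B * N = 0 := by
    have hfs : fsq (B * N) = 0 := by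
      rw [fsq_eq_trace]
      have : (B * N)ᵀ * (B * N) = Nᵀ * (G * N) := by
        rw [hGdef, Matrix.transpose_mul]; simp [Matrix.mul_assoc]
      rw [this, hGN0, Matrix.mul_zero, Matrix.trace_zero]
    have : fno (B * N) = 0 := by rw [fno_eq_sqrt, hfs, Real.sqrt_zero]
    exact fno_eq_zero this
  have hBXX : B * (X0 * X0ᵀ) = B := by
    have : B * (X0 * X0ᵀ + N * Nᵀ) = B := by rw [hcomplete, Matrix.mul_one]
    calc B * (X0 * X0ᵀ) = B * (X0 * X0ᵀ + N * Nᵀ) - (B * N) * Nᵀ := by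
          rw [Matrix.mul_add, ← Matrix.mul_assoc B N Nᵀ]; abel
      _ = B := by rw [this, hBN, Matrix.zero_mul, sub_zero]
  set γ0 : {j : Fin P2 // μ j ≠ 0} → ℝ := fun i => Real.sqrt (μ i.val) with hγ0def
  have hμpos : ∀ i : {j : Fin P2 // μ j ≠ 0}, 0 < μ i.val :=
    fun i => lt_of_le_of_ne (hμnonneg i.val) (Ne.symm i.2)
  have hγ0pos : ∀ i, 0 < γ0 i := fun i => Real.sqrt_pos.mpr (hμpos i)
  set W0 : Matrix (Fin P1) {j : Fin P2 // μ j ≠ 0} ℝ :=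
    B * X0 * Matrix.diagonal (fun i => (γ0 i)⁻¹) with hW0def
  have hXGX : X0ᵀ * (G * X0) = Matrix.diagonal (fun i : {j : Fin P2 // μ j ≠ 0} => μ i.val) := by
    rw [hGX, ← Matrix.mul_assoc, hX0, Matrix.one_mul]
  have hW0W0 : W0ᵀ * W0 = 1 := by
    have expand : W0ᵀ * W0 = Matrix.diagonal (fun i => (γ0 i)⁻¹) * (X0ᵀ * (G * X0)) *
        Matrix.diagonal (fun i => (γ0 i)⁻¹) := by
      rw [hW0def, hGdef, Matrix.transpose_mul, Matrix.transpose_mul,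
        Matrix.diagonal_transpose]
      simp [Matrix.mul_assoc]
    rw [expand, hXGX, Matrix.diagonal_mul_diagonal, Matrix.diagonal_mul_diagonal]
    have heq : (fun i => (γ0 i)⁻¹ * μ i.val * (γ0 i)⁻¹) = fun _ : {j : Fin P2 // μ j ≠ 0} => (1:ℝ) := by
      funext i
      have h1 : γ0 i * γ0 i = μ i.val := Real.mul_self_sqrt (hμnonneg i.val)
      have hne : γ0 i ≠ 0 := (hγ0pos i).ne'
      rw [← h1]
      field_simp
    rw [heq, Matrix.diagonal_one]
  have hBX0 : B * X0 = W0 * Matrix.diagonal γ0 := by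
    rw [hW0def, Matrix.mul_assoc, Matrix.mul_assoc, Matrix.diagonal_mul_diagonal]
    have : (fun i => (γ0 i)⁻¹ * γ0 i) = fun _ => (1:ℝ) := by
      funext i; exact inv_mul_cancel₀ (hγ0pos i).ne'
    rw [this, Matrix.diagonal_one, Matrix.mul_one]
  have hfact0 : B = W0 * Matrix.diagonal γ0 * X0ᵀ := by
    rw [← hBX0, Matrix.mul_assoc, hBXX]
  have hcard0 : Fintype.card {j : Fin P2 // μ j ≠ 0} ≤ B.rank := by
    have hdiag : W0ᵀ * (B * X0) = Matrix.diagonal γ0 := by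
      rw [hBX0, ← Matrix.mul_assoc, hW0W0, Matrix.one_mul]
    have h1 : (Matrix.diagonal γ0).rank = Fintype.card {j : Fin P2 // μ j ≠ 0} := by
      rw [Matrix.rank_diagonal]
      exact Fintype.card_congr (Equiv.subtypeUnivEquiv fun i => (hγ0pos i).ne')
    calc Fintype.card {j : Fin P2 // μ j ≠ 0} = (Matrix.diagonal γ0).rank := h1.symm
      _ = (W0ᵀ * (B * X0)).rank := by rw [hdiag]
      _ ≤ (B * X0).rank := Matrix.rank_mul_le_right _ _
      _ ≤ B.rank := Matrix.rank_mul_le_left _ _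
  -- transport to Fin r
  obtain ⟨e⟩ : Nonempty ({j : Fin P2 // μ j ≠ 0} ≃ Fin (Fintype.card {j : Fin P2 // μ j ≠ 0})) :=
    ⟨Fintype.equivFin _⟩
  refine ⟨Fintype.card {j : Fin P2 // μ j ≠ 0}, W0.submatrix id e.symm, X0.submatrix id e.symm, γ0 ∘ e.symm, ?_, ?_, ?_, ?_, ?_⟩
  · rw [Matrix.transpose_submatrix]
    rw [show (id : Fin P1 → Fin P1) = ⇑(Equiv.refl (Fin P1)) from rfl]
    rw [Matrix.submatrix_mul_equiv, hW0W0, Matrix.submatrix_one_equiv]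
  · rw [Matrix.transpose_submatrix]
    rw [show (id : Fin P2 → Fin P2) = ⇑(Equiv.refl (Fin P2)) from rfl]
    rw [Matrix.submatrix_mul_equiv, hX0, Matrix.submatrix_one_equiv]
  · have hdiagsub : Matrix.diagonal (γ0 ∘ e.symm) =
        (Matrix.diagonal γ0).submatrix e.symm e.symm := by
      ext i j
      by_cases h : i = j
      · subst h; simp
      · have h2 : e.symm i ≠ e.symm j := fun hc => h (e.symm.injective hc)
        simp [Matrix.diagonal_apply_ne _ h, Matrix.diagonal_apply_ne _ h2]
    rw [hdiagsub, Matrix.submatrix_mul_equiv, Matrix.transpose_submatrix,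
      Matrix.submatrix_mul_equiv]
    rw [← hfact0]
    rfl
  · intro i
    exact hγ0pos (e.symm i)
  · exact hcard0


end FrobAux

namespace FrobAux
variable {m n p q : Type*} [Fintype m] [Fintype n] [Fintype p] [Fintype q]

lemma projT (X : Matrix m n ℝ) : (X * Xᵀ)ᵀ = X * Xᵀ := by
  rw [Matrix.transpose_mul, Matrix.transpose_transpose]

lemma projIdem [DecidableEq n] (X : Matrix m n ℝ) (h : Xᵀ * X = 1) :
    (X * Xᵀ) * (X * Xᵀ) = X * Xᵀ := by
  calc (X * Xᵀ) * (X * Xᵀ) = X * ((Xᵀ * X) * Xᵀ) := by simp [Matrix.mul_assoc]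
    _ = X * Xᵀ := by rw [h, Matrix.one_mul]

lemma oneSubT [DecidableEq m] (H : Matrix m m ℝ) (h : Hᵀ = H) : (1 - H)ᵀ = 1 - H := by
  rw [Matrix.transpose_sub, Matrix.transpose_one, h]

lemma oneSubIdem [DecidableEq m] (H : Matrix m m ℝ) (h : H * H = H) :
    (1 - H) * (1 - H) = 1 - H := by
  rw [Matrix.sub_mul, Matrix.mul_sub, Matrix.mul_sub, h]
  simp only [Matrix.one_mul, Matrix.mul_one]
  abel

lemma fno_sub_le (A B : Matrix m n ℝ) : fno (A - B) ≤ fno A + fno B := by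
  rw [sub_eq_add_neg]
  exact le_trans (fno_add_le A (-B)) (by rw [fno_neg])

lemma complete_proj {P1 R : ℕ} (U : Matrix (Fin P1) (Fin R) ℝ)
    (Uperp : Matrix (Fin P1) (Fin (P1 - R)) ℝ)
    (hU : Uᵀ * U = 1) (hUperp : Uperpᵀ * Uperp = 1) (hUorth : Uᵀ * Uperp = 0)
    (hR : R ≤ P1) : U * Uᵀ + Uperp * Uperpᵀ = 1 := by
  have hUorth' : Uperpᵀ * U = 0 := by
    have : Uperpᵀ * U = (Uᵀ * Uperp)ᵀ := by
      rw [Matrix.transpose_mul, Matrix.transpose_transpose]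
    rw [this, hUorth, Matrix.transpose_zero]
  have e : Fin P1 ≃ Fin R ⊕ Fin (P1 - R) :=
    (finCongr (Nat.add_sub_cancel' hR).symm).trans finSumFinEquiv.symm
  have h1 : Matrix.fromRows Uᵀ Uperpᵀ * Matrix.fromCols U Uperp = 1 := by
    rw [Matrix.fromRows_mul_fromCols, hU, hUperp, hUorth, hUorth', ← Matrix.fromBlocks_one]
  have h2 := (Matrix.fromCols_mul_fromRows_eq_one_comm e U Uperp Uᵀ Uperpᵀ).mpr h1
  rwa [Matrix.fromCols_mul_fromRows] at h2

end FrobAux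

open FrobAux

set_option maxHeartbeats 1000000

/-- Frobenius norm of a real matrix. -/
noncomputable def frobNorm {m n : ℕ} (A : Matrix (Fin m) (Fin n) ℝ) : ℝ :=
  Real.sqrt (∑ i, ∑ j, (A i j) ^ 2)

/-- perturbation bound for the best rank-`R` approximation.
Let `M = U Σ Vᵀ` be a compact SVD of a rank-`R` matrix with smallest nonzero
singular value at least `λmin > 0`, and let `U⊥, V⊥` be orthonormal bases of
the orthogonal complements of the column spans of `U, V`.  If
`‖M̂ - M‖_F ≤ λmin/8`, then any best rank-`R` approximation `B` of `M̂` in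
Frobenius norm satisfies `B - M = Z - U⊥U⊥ᵀ Z V⊥V⊥ᵀ + Rem` with
`‖Rem‖_F ≤ 40 ‖M̂ - M‖_F² / λmin`, where `Z = M̂ - M`. -/
theorem stmt4 {P1 P2 R : ℕ} (M Mhat : Matrix (Fin P1) (Fin P2) ℝ)
    (U : Matrix (Fin P1) (Fin R) ℝ) (V : Matrix (Fin P2) (Fin R) ℝ)
    (σ : Fin R → ℝ) (lam : ℝ)
    (Uperp : Matrix (Fin P1) (Fin (P1 - R)) ℝ)
    (Vperp : Matrix (Fin P2) (Fin (P2 - R)) ℝ)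
    (hU : Uᵀ * U = 1) (hV : Vᵀ * V = 1)
    (hUperp : Uperpᵀ * Uperp = 1) (hVperp : Vperpᵀ * Vperp = 1)
    (hUorth : Uᵀ * Uperp = 0) (hVorth : Vᵀ * Vperp = 0)
    (hSVD : M = U * Matrix.diagonal σ * Vᵀ)
    (hrank : M.rank = R)
    (hlam : 0 < lam) (hσ : ∀ i, lam ≤ σ i)
    (hclose : frobNorm (Mhat - M) ≤ lam / 8)
    (B : Matrix (Fin P1) (Fin P2) ℝ)
    (hBrank : B.rank ≤ R)
    (hBbest : ∀ C : Matrix (Fin P1) (Fin P2) ℝ, C.rank ≤ R →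
      frobNorm (Mhat - B) ≤ frobNorm (Mhat - C)) :
    ∃ Rem : Matrix (Fin P1) (Fin P2) ℝ,
      B - M = (Mhat - M) - Uperp * Uperpᵀ * (Mhat - M) * (Vperp * Vperpᵀ) + Rem ∧
      frobNorm Rem ≤ 40 * frobNorm (Mhat - M) ^ 2 / lam := by
  have hfr : ∀ {a b : ℕ} (A : Matrix (Fin a) (Fin b) ℝ), frobNorm A = fno A := fun _ => rfl
  have hR1 : R ≤ P1 := by
    have h := M.rank_le_card_height
    rw [hrank, Fintype.card_fin] at h
    exact h
  have hR2 : R ≤ P2 := by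
    have h := M.rank_le_card_width
    rw [hrank, Fintype.card_fin] at h
    exact h
  have hPcomp : U * Uᵀ + Uperp * Uperpᵀ = 1 := complete_proj U Uperp hU hUperp hUorth hR1
  have hQcomp : V * Vᵀ + Vperp * Vperpᵀ = 1 := complete_proj V Vperp hV hVperp hVorth hR2
  obtain ⟨r, W, X, γ, hW, hX, hfact, hγpos, hrB⟩ := exists_rsvd B
  have hrR : r ≤ R := le_trans hrB hBrank
  have hzn : 0 ≤ fno (Mhat - M) := fno_nonneg _
  have hz8 : fno (Mhat - M) ≤ lam / 8 := by rw [← hfr]; exact hclose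
  -- projector basic facts
  have hPbT : (W * Wᵀ)ᵀ = W * Wᵀ := projT W
  have hPbI : (W * Wᵀ) * (W * Wᵀ) = W * Wᵀ := projIdem W hW
  have hQbT : (X * Xᵀ)ᵀ = X * Xᵀ := projT X
  have hQbI : (X * Xᵀ) * (X * Xᵀ) = X * Xᵀ := projIdem X hX
  have hPT : (U * Uᵀ)ᵀ = U * Uᵀ := projT U
  have hPI : (U * Uᵀ) * (U * Uᵀ) = U * Uᵀ := projIdem U hU
  have hQT : (V * Vᵀ)ᵀ = V * Vᵀ := projT V
  have hQI : (V * Vᵀ) * (V * Vᵀ) = V * Vᵀ := projIdem V hV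
  have hPpT : (Uperp * Uperpᵀ)ᵀ = Uperp * Uperpᵀ := projT Uperp
  have hPpI : (Uperp * Uperpᵀ) * (Uperp * Uperpᵀ) = Uperp * Uperpᵀ := projIdem Uperp hUperp
  have hQpT : (Vperp * Vperpᵀ)ᵀ = Vperp * Vperpᵀ := projT Vperp
  have hQpI : (Vperp * Vperpᵀ) * (Vperp * Vperpᵀ) = Vperp * Vperpᵀ := projIdem Vperp hVperp
  have hPbB : (W * Wᵀ) * B = B := by
    rw [hfact]
    calc (W * Wᵀ) * (W * Matrix.diagonal γ * Xᵀ)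
        = W * ((Wᵀ * W) * (Matrix.diagonal γ * Xᵀ)) := by simp [Matrix.mul_assoc]
      _ = W * Matrix.diagonal γ * Xᵀ := by rw [hW, Matrix.one_mul, Matrix.mul_assoc]
  have hBQb : B * (X * Xᵀ) = B := by
    rw [hfact]
    calc W * Matrix.diagonal γ * Xᵀ * (X * Xᵀ)
        = W * Matrix.diagonal γ * ((Xᵀ * X) * Xᵀ) := by simp [Matrix.mul_assoc]
      _ = W * Matrix.diagonal γ * Xᵀ := by rw [hX, Matrix.one_mul]
  -- forcing B = Pb * Mhat
  have key1 : (W * Wᵀ) * Mhat = B := by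
    have hrC : ((W * Wᵀ) * Mhat).rank ≤ R := by
      calc ((W * Wᵀ) * Mhat).rank ≤ (W * Wᵀ).rank := Matrix.rank_mul_le_left _ _
        _ ≤ W.rank := Matrix.rank_mul_le_left _ _
        _ ≤ r := by simpa using W.rank_le_card_width
        _ ≤ R := hrR
    have hb := hBbest _ hrC
    rw [hfr, hfr] at hb
    have hsplit : Mhat - B = (Mhat - (W * Wᵀ) * Mhat) + ((W * Wᵀ) * (Mhat - B)) := by
      rw [Matrix.mul_sub, hPbB]
      abel
    have hzero : (Mhat - (W * Wᵀ) * Mhat)ᵀ * ((W * Wᵀ) * (Mhat - B)) = 0 := by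
      have h1 : (Mhat - (W * Wᵀ) * Mhat)ᵀ * ((W * Wᵀ) * (Mhat - B)) =
          Mhatᵀ * ((W * Wᵀ) * (Mhat - B)) -
          Mhatᵀ * ((W * Wᵀ) * ((W * Wᵀ) * (Mhat - B))) := by
        rw [Matrix.transpose_sub, Matrix.transpose_mul, hPbT, Matrix.sub_mul]
        simp [Matrix.mul_assoc]
      have h2 : (W * Wᵀ) * ((W * Wᵀ) * (Mhat - B)) = (W * Wᵀ) * (Mhat - B) := by
        rw [← Matrix.mul_assoc, hPbI]
      rw [h1, h2, sub_self]
    have hp := pyth _ _ (by rw [hzero, Matrix.trace_zero])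
    rw [← hsplit] at hp
    have hsqle : fsq (Mhat - B) ≤ fsq (Mhat - (W * Wᵀ) * Mhat) := by
      rw [← fno_sq, ← fno_sq]
      exact pow_le_pow_left₀ (fno_nonneg _) hb 2
    have hz : fsq ((W * Wᵀ) * (Mhat - B)) = 0 := by
      have := fsq_nonneg ((W * Wᵀ) * (Mhat - B))
      linarith
    have h0 : (W * Wᵀ) * (Mhat - B) = 0 := by
      apply fno_eq_zero
      rw [fno_eq_sqrt, hz, Real.sqrt_zero]
    have := sub_eq_zero.mp (by rw [Matrix.mul_sub, hPbB] at h0; exact h0)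
    exact this
  -- forcing B = Mhat * Qb
  have key2 : Mhat * (X * Xᵀ) = B := by
    have hrC : (Mhat * (X * Xᵀ)).rank ≤ R := by
      calc (Mhat * (X * Xᵀ)).rank ≤ (X * Xᵀ).rank := Matrix.rank_mul_le_right _ _
        _ ≤ Xᵀ.rank := Matrix.rank_mul_le_right _ _
        _ ≤ r := by simpa using Xᵀ.rank_le_card_height
        _ ≤ R := hrR
    have hb := hBbest _ hrC
    rw [hfr, hfr] at hb
    have hsplit : Mhat - B = (Mhat - Mhat * (X * Xᵀ)) + ((Mhat - B) * (X * Xᵀ)) := by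
      rw [Matrix.sub_mul, hBQb]
      abel
    have hzero : Matrix.trace ((Mhat - Mhat * (X * Xᵀ))ᵀ * ((Mhat - B) * (X * Xᵀ))) = 0 := by
      have h1 : (Mhat - Mhat * (X * Xᵀ))ᵀ * ((Mhat - B) * (X * Xᵀ)) =
          Mhatᵀ * ((Mhat - B) * (X * Xᵀ)) -
          (X * Xᵀ) * (Mhatᵀ * ((Mhat - B) * (X * Xᵀ))) := by
        rw [Matrix.transpose_sub, Matrix.transpose_mul, hQbT, Matrix.sub_mul]
        simp [Matrix.mul_assoc]
      rw [h1, Matrix.trace_sub, Matrix.trace_mul_comm (X * Xᵀ)]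
      have h2 : Mhatᵀ * ((Mhat - B) * (X * Xᵀ)) * (X * Xᵀ) =
          Mhatᵀ * ((Mhat - B) * (X * Xᵀ)) := by
        calc Mhatᵀ * ((Mhat - B) * (X * Xᵀ)) * (X * Xᵀ)
            = Mhatᵀ * ((Mhat - B) * ((X * Xᵀ) * (X * Xᵀ))) := by simp [Matrix.mul_assoc]
          _ = Mhatᵀ * ((Mhat - B) * (X * Xᵀ)) := by rw [hQbI]
      rw [h2, sub_self]
    have hp := pyth _ _ hzero
    rw [← hsplit] at hp
    have hsqle : fsq (Mhat - B) ≤ fsq (Mhat - Mhat * (X * Xᵀ)) := by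
      rw [← fno_sq, ← fno_sq]
      exact pow_le_pow_left₀ (fno_nonneg _) hb 2
    have hz : fsq ((Mhat - B) * (X * Xᵀ)) = 0 := by
      have := fsq_nonneg ((Mhat - B) * (X * Xᵀ))
      linarith
    have h0 : (Mhat - B) * (X * Xᵀ) = 0 := by
      apply fno_eq_zero
      rw [fno_eq_sqrt, hz, Real.sqrt_zero]
    have := sub_eq_zero.mp (by rw [Matrix.sub_mul, hBQb] at h0; exact h0)
    exact this
  have hEQb : (Mhat - B) * (X * Xᵀ) = 0 := by
    rw [Matrix.sub_mul, hBQb, key2, sub_self]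
  have hEn : fno (Mhat - B) ≤ fno (Mhat - M) := by
    have := hBbest M (le_of_eq hrank)
    rwa [hfr, hfr] at this
  have hBMn : fno (B - M) ≤ 2 * fno (Mhat - M) := by
    have h1 : B - M = (B - Mhat) + (Mhat - M) := by abel
    rw [h1]
    have := fno_add_le (B - Mhat) (Mhat - M)
    rw [fno_sub_comm B Mhat] at this
    linarith
  have hPpM : (Uperp * Uperpᵀ) * M = 0 := by
    rw [hSVD]
    have hUpU : Uperpᵀ * U = 0 := by
      have : Uperpᵀ * U = (Uᵀ * Uperp)ᵀ := by
        rw [Matrix.transpose_mul, Matrix.transpose_transpose]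
      rw [this, hUorth, Matrix.transpose_zero]
    calc (Uperp * Uperpᵀ) * (U * Matrix.diagonal σ * Vᵀ)
        = Uperp * ((Uperpᵀ * U) * (Matrix.diagonal σ * Vᵀ)) := by simp [Matrix.mul_assoc]
      _ = 0 := by rw [hUpU, Matrix.zero_mul, Matrix.mul_zero]
  have hMQp : M * (Vperp * Vperpᵀ) = 0 := by
    rw [hSVD]
    calc U * Matrix.diagonal σ * Vᵀ * (Vperp * Vperpᵀ)
        = U * (Matrix.diagonal σ * ((Vᵀ * Vperp) * Vperpᵀ)) := by simp [Matrix.mul_assoc]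
      _ = 0 := by rw [hVorth, Matrix.zero_mul, Matrix.mul_zero, Matrix.mul_zero]
  -- K1
  have hK1 : lam * fno ((1 - W * Wᵀ) * U) ≤ 2 * fno (Mhat - M) := by
    have c1 : lam * fno ((1 - W * Wᵀ) * U) ≤ fno ((1 - W * Wᵀ) * U * Matrix.diagonal σ) :=
      diag_right _ σ hlam.le hσ
    have c2 : fno ((1 - W * Wᵀ) * U * Matrix.diagonal σ) = fno ((1 - W * Wᵀ) * M) := by
      rw [← iso_right V ((1 - W * Wᵀ) * U * Matrix.diagonal σ) hV, hSVD]
      simp [Matrix.mul_assoc]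
    have c3 : (1 - W * Wᵀ) * M = (1 - W * Wᵀ) * Mhat - (1 - W * Wᵀ) * (Mhat - M) := by
      rw [← Matrix.mul_sub]
      congr 1
      abel
    have c4 : (1 - W * Wᵀ) * Mhat = Mhat - B := by
      rw [Matrix.sub_mul, Matrix.one_mul, key1]
    have c5 : fno ((1 - W * Wᵀ) * M) ≤ fno (Mhat - B) + fno ((1 - W * Wᵀ) * (Mhat - M)) := by
      rw [c3, c4]
      exact fno_sub_le _ _
    have c6 : fno ((1 - W * Wᵀ) * (Mhat - M)) ≤ fno (Mhat - M) :=
      contract_left _ _ (oneSubT _ hPbT) (oneSubIdem _ hPbI)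
    linarith
  -- K2
  have hK2 : lam * fno ((1 - X * Xᵀ) * V) ≤ 2 * fno (Mhat - M) := by
    have c0 : fno ((1 - X * Xᵀ) * V) = fno (Vᵀ * (1 - X * Xᵀ)) := by
      rw [← fno_transpose ((1 - X * Xᵀ) * V), Matrix.transpose_mul, oneSubT _ hQbT]
    have c1 : lam * fno (Vᵀ * (1 - X * Xᵀ)) ≤ fno (Matrix.diagonal σ * (Vᵀ * (1 - X * Xᵀ))) :=
      diag_left _ σ hlam.le hσ
    have c2 : fno (Matrix.diagonal σ * (Vᵀ * (1 - X * Xᵀ))) = fno (M * (1 - X * Xᵀ)) := by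
      rw [← iso_left U (Matrix.diagonal σ * (Vᵀ * (1 - X * Xᵀ))) hU, hSVD]
      simp [Matrix.mul_assoc]
    have c3 : M * (1 - X * Xᵀ) = Mhat * (1 - X * Xᵀ) - (Mhat - M) * (1 - X * Xᵀ) := by
      rw [← Matrix.sub_mul]
      congr 1
      abel
    have c4 : Mhat * (1 - X * Xᵀ) = Mhat - B := by
      rw [Matrix.mul_sub, Matrix.mul_one, key2]
    have c5 : fno (M * (1 - X * Xᵀ)) ≤ fno (Mhat - B) + fno ((Mhat - M) * (1 - X * Xᵀ)) := by
      rw [c3, c4]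
      exact fno_sub_le _ _
    have c6 : fno ((Mhat - M) * (1 - X * Xᵀ)) ≤ fno (Mhat - M) :=
      contract_right _ _ (oneSubT _ hQbT) (oneSubIdem _ hQbI)
    rw [c0]
    linarith
  -- counting: r = R and row-space closeness
  have s1 : fsq ((1 - X * Xᵀ) * V) = (R : ℝ) - Matrix.trace ((X * Xᵀ) * (V * Vᵀ)) := by
    rw [fsq_eq_trace]
    have h1 : ((1 - X * Xᵀ) * V)ᵀ * ((1 - X * Xᵀ) * V) = Vᵀ * ((1 - X * Xᵀ) * V) := by
      rw [Matrix.transpose_mul, oneSubT _ hQbT, Matrix.mul_assoc]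
      rw [← Matrix.mul_assoc (1 - X * Xᵀ) (1 - X * Xᵀ) V, oneSubIdem _ hQbI]
    rw [h1, Matrix.sub_mul, Matrix.one_mul, Matrix.mul_sub, Matrix.trace_sub]
    congr 1
    · rw [hV, Matrix.trace_one, Fintype.card_fin]
    · rw [Matrix.trace_mul_comm, Matrix.mul_assoc]
  have s2 : fsq ((1 - V * Vᵀ) * X) = (r : ℝ) - Matrix.trace ((X * Xᵀ) * (V * Vᵀ)) := by
    rw [fsq_eq_trace]
    have h1 : ((1 - V * Vᵀ) * X)ᵀ * ((1 - V * Vᵀ) * X) = Xᵀ * ((1 - V * Vᵀ) * X) := by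
      rw [Matrix.transpose_mul, oneSubT _ hQT, Matrix.mul_assoc]
      rw [← Matrix.mul_assoc (1 - V * Vᵀ) (1 - V * Vᵀ) X, oneSubIdem _ hQI]
    rw [h1, Matrix.sub_mul, Matrix.one_mul, Matrix.mul_sub, Matrix.trace_sub]
    congr 1
    · rw [hX, Matrix.trace_one, Fintype.card_fin]
    · rw [Matrix.trace_mul_comm, Matrix.mul_assoc, Matrix.trace_mul_comm]
  have hn3quarter : fno ((1 - X * Xᵀ) * V) ≤ 1 / 4 := by
    have h2 : lam * fno ((1 - X * Xᵀ) * V) ≤ lam * (1 / 4) := by linarith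
    exact le_of_mul_le_mul_left h2 hlam
  have hs1le : fsq ((1 - X * Xᵀ) * V) ≤ 1 / 16 := by
    rw [← fno_sq]
    calc fno ((1 - X * Xᵀ) * V) ^ 2 ≤ (1 / 4 : ℝ) ^ 2 :=
          pow_le_pow_left₀ (fno_nonneg _) hn3quarter 2
      _ = 1 / 16 := by norm_num
  have hrEq : r = R := by
    refine le_antisymm hrR ?_
    by_contra hlt
    push_neg at hlt
    have h1 : (r : ℝ) + 1 ≤ (R : ℝ) := by exact_mod_cast Nat.succ_le_of_lt hlt
    have h2 := fsq_nonneg ((1 - V * Vᵀ) * X)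
    rw [s2] at h2
    rw [s1] at hs1le
    linarith
  have hK4 : fno ((1 - V * Vᵀ) * X) ≤ 1 / 4 := by
    have hc : ((r : ℕ) : ℝ) = ((R : ℕ) : ℝ) := by rw [hrEq]
    have : fno ((1 - V * Vᵀ) * X) = fno ((1 - X * Xᵀ) * V) := by
      rw [fno_eq_sqrt, fno_eq_sqrt, s1, s2, hc]
    rw [this]
    exact hn3quarter
  -- lower bound on γ
  have hγlb : ∀ i, 5 / 8 * lam ≤ γ i := by
    intro i
    set ei : Matrix (Fin r) (Fin 1) ℝ :=
      Matrix.of (fun (j : Fin r) (_ : Fin 1) => if j = i then (1 : ℝ) else 0) with heidef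
    have hfsq_ei : fsq ei = 1 := by
      simp only [fsq, heidef, Matrix.of_apply]
      rw [Finset.sum_comm]
      simp [Finset.sum_ite_eq' Finset.univ i]
    have hno_ei : fno ei = 1 := by rw [fno_eq_sqrt, hfsq_ei, Real.sqrt_one]
    have hfnoXei : fno (X * ei) = 1 := by rw [iso_left X ei hX, hno_ei]
    have hBxMx : B * (X * ei) = Mhat * (X * ei) := by
      rw [← key2]
      calc Mhat * (X * Xᵀ) * (X * ei) = Mhat * (X * ((Xᵀ * X) * ei)) := by
            simp [Matrix.mul_assoc]
        _ = Mhat * (X * ei) := by rw [hX, Matrix.one_mul]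
    have hdiag_ei : Matrix.diagonal γ * ei = γ i • ei := by
      ext j k
      rw [Matrix.diagonal_mul]
      by_cases h : j = i
      · subst h; simp [heidef]
      · simp [heidef, h]
    have hBxW : B * (X * ei) = W * (γ i • ei) := by
      rw [hfact]
      calc W * Matrix.diagonal γ * Xᵀ * (X * ei)
          = W * (Matrix.diagonal γ * ((Xᵀ * X) * ei)) := by simp [Matrix.mul_assoc]
        _ = W * (γ i • ei) := by rw [hX, Matrix.one_mul, hdiag_ei]
    have hfnoBx : fno (B * (X * ei)) = γ i := by
      rw [hBxW, iso_left W _ hW, fno_smul, hno_ei, mul_one, abs_of_pos (hγpos i)]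
    have h1Qx : fno ((1 - V * Vᵀ) * (X * ei)) ≤ 1 / 4 := by
      rw [← Matrix.mul_assoc]
      calc fno ((1 - V * Vᵀ) * X * ei) ≤ fno ((1 - V * Vᵀ) * X) * fno ei := fno_mul_le _ _
        _ ≤ 1 / 4 * 1 := by
            apply mul_le_mul hK4 (le_of_eq hno_ei) (fno_nonneg _) (by norm_num)
        _ = 1 / 4 := by norm_num
    have hsplitx : X * ei = (V * Vᵀ) * (X * ei) + (1 - V * Vᵀ) * (X * ei) := by
      rw [← Matrix.add_mul]
      simp
    have hQxlb : 3 / 4 ≤ fno ((V * Vᵀ) * (X * ei)) := by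
      have := fno_add_le ((V * Vᵀ) * (X * ei)) ((1 - V * Vᵀ) * (X * ei))
      rw [← hsplitx, hfnoXei] at this
      linarith
    have hVtx : fno (Vᵀ * (X * ei)) = fno ((V * Vᵀ) * (X * ei)) := by
      rw [← iso_left V (Vᵀ * (X * ei)) hV, Matrix.mul_assoc]
    have hMx : lam * (3 / 4) ≤ fno (M * (X * ei)) := by
      have e1 : M * (X * ei) = U * (Matrix.diagonal σ * (Vᵀ * (X * ei))) := by
        rw [hSVD]; simp [Matrix.mul_assoc]
      rw [e1, iso_left U _ hU]
      calc lam * (3 / 4) ≤ lam * fno (Vᵀ * (X * ei)) := by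
            apply mul_le_mul_of_nonneg_left _ hlam.le
            rw [hVtx]; exact hQxlb
        _ ≤ fno (Matrix.diagonal σ * (Vᵀ * (X * ei))) := diag_left _ σ hlam.le hσ
    have hZx : fno ((Mhat - M) * (X * ei)) ≤ fno (Mhat - M) := by
      calc fno ((Mhat - M) * (X * ei)) ≤ fno (Mhat - M) * fno (X * ei) := fno_mul_le _ _
        _ = fno (Mhat - M) := by rw [hfnoXei, mul_one]
    have htr : fno (M * (X * ei)) ≤ fno (Mhat * (X * ei)) + fno ((Mhat - M) * (X * ei)) := by
      have e2 : M * (X * ei) = Mhat * (X * ei) - (Mhat - M) * (X * ei) := by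
        rw [← Matrix.sub_mul]
        congr 1
        abel
      rw [e2]
      exact fno_sub_le _ _
    rw [hBxMx] at hfnoBx
    linarith
  -- K6
  have hK6 : 5 / 8 * lam * fno (Uperp * Uperpᵀ * W) ≤ 2 * fno (Mhat - M) := by
    have c1 : 5 / 8 * lam * fno (Uperp * Uperpᵀ * W) ≤
        fno (Uperp * Uperpᵀ * W * Matrix.diagonal γ) :=
      diag_right _ γ (by linarith) hγlb
    have c2 : fno (Uperp * Uperpᵀ * W * Matrix.diagonal γ) = fno (Uperp * Uperpᵀ * B) := by
      rw [← iso_right X (Uperp * Uperpᵀ * W * Matrix.diagonal γ) hX, hfact]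
      congr 1
      simp [Matrix.mul_assoc]
    have c3 : Uperp * Uperpᵀ * B = Uperp * Uperpᵀ * (B - M) := by
      rw [Matrix.mul_sub, hPpM, sub_zero]
    have c4 : fno (Uperp * Uperpᵀ * (B - M)) ≤ fno (B - M) :=
      contract_left _ _ hPpT hPpI
    rw [c3] at c2
    linarith
  -- the remainder decomposition
  set T1 : Matrix (Fin P1) (Fin P2) ℝ :=
    W * (Wᵀ * (Uperp * Uperpᵀ * (Mhat * (Vperp * Vperpᵀ)))) with hT1def
  set T2 : Matrix (Fin P1) (Fin P2) ℝ :=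
    ((1 - W * Wᵀ) * U) * (Uᵀ * (Mhat * (Vperp * Vperpᵀ))) with hT2def
  set T3 : Matrix (Fin P1) (Fin P2) ℝ := (Mhat - B) * (V * Vᵀ) with hT3def
  have hUUt : U * Uᵀ = 1 - Uperp * Uperpᵀ := by rw [← hPcomp]; abel
  have hVVt : V * Vᵀ = 1 - Vperp * Vperpᵀ := by rw [← hQcomp]; abel
  have hPpZQp : Uperp * Uperpᵀ * (Mhat - M) * (Vperp * Vperpᵀ) =
      Uperp * Uperpᵀ * (Mhat * (Vperp * Vperpᵀ)) := by
    rw [Matrix.mul_sub, hPpM, sub_zero, Matrix.mul_assoc]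
  have hA : (1 - W * Wᵀ) * U * (Uᵀ * (Mhat * (Vperp * Vperpᵀ))) =
      (1 - W * Wᵀ) * ((1 - Uperp * Uperpᵀ) * (Mhat * (Vperp * Vperpᵀ))) := by
    rw [Matrix.mul_assoc, ← Matrix.mul_assoc U Uᵀ _, hUUt]
  have hmain : B - M - ((Mhat - M) - Uperp * Uperpᵀ * (Mhat - M) * (Vperp * Vperpᵀ)) =
      T1 - T2 - T3 := by
    rw [hPpZQp, hT1def, hT2def, hT3def, hA, hVVt, ← key1]
    simp only [Matrix.mul_sub, Matrix.sub_mul, Matrix.mul_add, Matrix.add_mul,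
      Matrix.mul_one, Matrix.one_mul, Matrix.mul_assoc]
    abel
  -- norm bounds for the three pieces
  have hYn : fno (Mhat * (Vperp * Vperpᵀ)) ≤ fno (Mhat - M) := by
    have e1 : Mhat * (Vperp * Vperpᵀ) = (Mhat - M) * (Vperp * Vperpᵀ) := by
      rw [Matrix.sub_mul, hMQp, sub_zero]
    rw [e1]
    exact contract_right _ _ hQpT hQpI
  have hb1 : fno T1 ≤ fno (Uperp * Uperpᵀ * W) * fno (Mhat - M) := by
    rw [hT1def, iso_left W _ hW, ← Matrix.mul_assoc]
    have e1 : fno (Wᵀ * (Uperp * Uperpᵀ)) = fno (Uperp * Uperpᵀ * W) := by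
      rw [← fno_transpose (Uperp * Uperpᵀ * W), Matrix.transpose_mul, hPpT]
    calc fno (Wᵀ * (Uperp * Uperpᵀ) * (Mhat * (Vperp * Vperpᵀ)))
        ≤ fno (Wᵀ * (Uperp * Uperpᵀ)) * fno (Mhat * (Vperp * Vperpᵀ)) := fno_mul_le _ _
      _ ≤ fno (Uperp * Uperpᵀ * W) * fno (Mhat - M) := by
          rw [e1]
          exact mul_le_mul_of_nonneg_left hYn (fno_nonneg _)
  have hUtY : fno (Uᵀ * (Mhat * (Vperp * Vperpᵀ))) ≤ fno (Mhat - M) := by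
    have e1 : fno (Uᵀ * (Mhat * (Vperp * Vperpᵀ))) =
        fno ((U * Uᵀ) * (Mhat * (Vperp * Vperpᵀ))) := by
      rw [← iso_left U (Uᵀ * (Mhat * (Vperp * Vperpᵀ))) hU, Matrix.mul_assoc]
    rw [e1]
    exact le_trans (contract_left _ _ hPT hPI) hYn
  have hb2 : fno T2 ≤ fno ((1 - W * Wᵀ) * U) * fno (Mhat - M) := by
    rw [hT2def]
    calc fno (((1 - W * Wᵀ) * U) * (Uᵀ * (Mhat * (Vperp * Vperpᵀ))))
        ≤ fno ((1 - W * Wᵀ) * U) * fno (Uᵀ * (Mhat * (Vperp * Vperpᵀ))) := fno_mul_le _ _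
      _ ≤ fno ((1 - W * Wᵀ) * U) * fno (Mhat - M) :=
          mul_le_mul_of_nonneg_left hUtY (fno_nonneg _)
  have hb3 : fno T3 ≤ fno (Mhat - M) * fno ((1 - X * Xᵀ) * V) := by
    rw [hT3def, ← Matrix.mul_assoc, iso_right V _ hV]
    have e1 : (Mhat - B) * V = (Mhat - B) * ((1 - X * Xᵀ) * V) := by
      have e0 : (1 - X * Xᵀ) * V = V - (X * Xᵀ) * V := by
        rw [Matrix.sub_mul, Matrix.one_mul]
      rw [e0, Matrix.mul_sub, ← Matrix.mul_assoc, hEQb, Matrix.zero_mul, sub_zero]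
    rw [e1]
    calc fno ((Mhat - B) * ((1 - X * Xᵀ) * V))
        ≤ fno (Mhat - B) * fno ((1 - X * Xᵀ) * V) := fno_mul_le _ _
      _ ≤ fno (Mhat - M) * fno ((1 - X * Xᵀ) * V) :=
          mul_le_mul_of_nonneg_right hEn (fno_nonneg _)
  refine ⟨T1 - T2 - T3, by rw [← hmain]; abel, ?_⟩
  rw [hfr, hfr]
  have htri : fno (T1 - T2 - T3) ≤ fno T1 + fno T2 + fno T3 := by
    calc fno (T1 - T2 - T3) ≤ fno (T1 - T2) + fno T3 := fno_sub_le _ _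
      _ ≤ fno T1 + fno T2 + fno T3 := by
          have := fno_sub_le T1 T2
          linarith
  rw [le_div_iff₀ hlam]
  set z := fno (Mhat - M)
  set n1 := fno (Uperp * Uperpᵀ * W)
  set n2 := fno ((1 - W * Wᵀ) * U)
  set n3 := fno ((1 - X * Xᵀ) * V)
  have hn1 : 0 ≤ n1 := fno_nonneg _
  have hn2 : 0 ≤ n2 := fno_nonneg _
  have hn3 : 0 ≤ n3 := fno_nonneg _
  have hm1 := mul_le_mul_of_nonneg_right hK6 hzn
  have hm2 := mul_le_mul_of_nonneg_right hK1 hzn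
  have hm3 := mul_le_mul_of_nonneg_right hK2 hzn
  have hT1n : 0 ≤ fno T1 := fno_nonneg _
  have hT2n : 0 ≤ fno T2 := fno_nonneg _
  have hT3n : 0 ≤ fno T3 := fno_nonneg _
  nlinarith [mul_le_mul_of_nonneg_right hb1 hlam.le, mul_le_mul_of_nonneg_right hb2 hlam.le,
    mul_le_mul_of_nonneg_right hb3 hlam.le, mul_nonneg hzn hzn, sq_nonneg z,
    mul_le_mul_of_nonneg_right htri hlam.le]
end

section
/- Let Y₀ be a design matrix with full column rank, H₀ its hat matrix, S another design matrix, and S̃ = (I − H₀)S of full column rank. For a response z = Y₀b₁ + Sb₂ + ν, the difference of residual sums of squares between the small model (design Y₀) and the large model (design [Y₀ S]) satisfies: RSS_small − RSS_large = ∥S̃(S̃^TS̃)^{-1}S̃^T(S̃b₂ + (I−H₀)ν)∥², and moreover RSS_small − RSS_large ≥ λ_min(S̃^TS̃)·∥b₂∥² + 2 b₂^T S̃^T (I−H₀)ν. -/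
open Matrix

private lemma dsn {k : ℕ} (v : Fin k → ℝ) : 0 ≤ v ⬝ᵥ v :=
  Finset.sum_nonneg fun _ _ => mul_self_nonneg _

private lemma dot_expand {k : ℕ} (u w : Fin k → ℝ) :
    (u + w) ⬝ᵥ (u + w) = u ⬝ᵥ u + 2 * (u ⬝ᵥ w) + w ⬝ᵥ w := by
  simp [add_dotProduct, dotProduct_add, dotProduct_comm w u]; ring

private lemma shift2 {k l : ℕ} (M : Matrix (Fin k) (Fin l) ℝ) (u : Fin l → ℝ) (w : Fin k → ℝ) :
    (M *ᵥ u) ⬝ᵥ w = u ⬝ᵥ (Mᵀ *ᵥ w) := by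
  rw [Matrix.mulVec_transpose, dotProduct_comm, Matrix.dotProduct_mulVec, dotProduct_comm]

/-- RSS difference between nested models.  For the response
`z = Y₀b₁ + Sb₂ + ν` with `H₀` the hat matrix of `Y₀` and `S̃ = (I - H₀)S`
of full column rank,
`RSS_small - RSS_large = ‖S̃(S̃ᵀS̃)⁻¹S̃ᵀ(S̃b₂ + (I-H₀)ν)‖²` and
`RSS_small - RSS_large ≥ λ_min(S̃ᵀS̃)·‖b₂‖² + 2 b₂ᵀS̃ᵀ(I-H₀)ν`, where
`λ_min(S̃ᵀS̃)` is characterized as a uniform quadratic-form lower bound. -/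
theorem stmt10 {m d0 d1 : ℕ}
    (Y0 : Matrix (Fin m) (Fin d0) ℝ) (S : Matrix (Fin m) (Fin d1) ℝ)
    (hY0 : Y0.rank = d0) (hY0inv : IsUnit (Y0ᵀ * Y0).det)
    (b1 : Fin d0 → ℝ) (b2 : Fin d1 → ℝ) (ν : Fin m → ℝ)
    (z : Fin m → ℝ) (hz : z = Y0 *ᵥ b1 + S *ᵥ b2 + ν) :
    let H0 : Matrix (Fin m) (Fin m) ℝ := Y0 * (Y0ᵀ * Y0)⁻¹ * Y0ᵀ
    let St : Matrix (Fin m) (Fin d1) ℝ := (1 - H0) * S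
    let PSt : Matrix (Fin m) (Fin m) ℝ := St * (Stᵀ * St)⁻¹ * Stᵀ
    let RSSsmall : ℝ := ⨅ γ1 : Fin d0 → ℝ, (z - Y0 *ᵥ γ1) ⬝ᵥ (z - Y0 *ᵥ γ1)
    let RSSlarge : ℝ := ⨅ γ : (Fin d0 → ℝ) × (Fin d1 → ℝ),
        (z - Y0 *ᵥ γ.1 - S *ᵥ γ.2) ⬝ᵥ (z - Y0 *ᵥ γ.1 - S *ᵥ γ.2)
    St.rank = d1 → IsUnit (Stᵀ * St).det →
    (RSSsmall - RSSlarge =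
        (PSt *ᵥ (St *ᵥ b2 + (1 - H0) *ᵥ ν)) ⬝ᵥ (PSt *ᵥ (St *ᵥ b2 + (1 - H0) *ᵥ ν))) ∧
    ∀ lam : ℝ, (∀ x : Fin d1 → ℝ, lam * (x ⬝ᵥ x) ≤ x ⬝ᵥ ((Stᵀ * St) *ᵥ x)) →
      lam * (b2 ⬝ᵥ b2) + 2 * (b2 ⬝ᵥ (Stᵀ *ᵥ ((1 - H0) *ᵥ ν))) ≤ RSSsmall - RSSlarge := by
  intro H0 St PSt RSSsmall RSSlarge hStrank hStinv
  have hH0 : H0 = Y0 * (Y0ᵀ * Y0)⁻¹ * Y0ᵀ := rfl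
  have hSt : St = (1 - H0) * S := rfl
  have hPSt : PSt = St * (Stᵀ * St)⁻¹ * Stᵀ := rfl
  have hYi : (Y0ᵀ * Y0)⁻¹ * (Y0ᵀ * Y0) = 1 := Matrix.nonsing_inv_mul _ hY0inv
  have hSi : (Stᵀ * St)⁻¹ * (Stᵀ * St) = 1 := Matrix.nonsing_inv_mul _ hStinv
  have hYsymInv : ((Y0ᵀ * Y0)⁻¹)ᵀ = (Y0ᵀ * Y0)⁻¹ := by
    rw [Matrix.transpose_nonsing_inv, Matrix.transpose_mul, Matrix.transpose_transpose]
  have hSsymInv : ((Stᵀ * St)⁻¹)ᵀ = (Stᵀ * St)⁻¹ := by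
    rw [Matrix.transpose_nonsing_inv, Matrix.transpose_mul, Matrix.transpose_transpose]
  have cancelY : ∀ {k : ℕ} (B : Matrix (Fin d0) (Fin k) ℝ),
      (Y0ᵀ * Y0)⁻¹ * (Y0ᵀ * (Y0 * B)) = B := by
    intro k B
    rw [← Matrix.mul_assoc Y0ᵀ Y0 B, ← Matrix.mul_assoc, hYi, Matrix.one_mul]
  have cancelSt : ∀ {k : ℕ} (B : Matrix (Fin d1) (Fin k) ℝ),
      (Stᵀ * St)⁻¹ * (Stᵀ * (St * B)) = B := by
    intro k B
    rw [← Matrix.mul_assoc Stᵀ St B, ← Matrix.mul_assoc, hSi, Matrix.one_mul]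
  have hH0sym : H0ᵀ = H0 := by
    rw [hH0]
    simp [Matrix.transpose_mul, hYsymInv, Matrix.mul_assoc]
  have hH0Y0 : H0 * Y0 = Y0 := by
    rw [hH0, Matrix.mul_assoc, Matrix.mul_assoc, hYi, Matrix.mul_one]
  have hH0H0 : H0 * H0 = H0 := by
    conv_lhs => rw [hH0]
    simp only [Matrix.mul_assoc]
    rw [cancelY, ← Matrix.mul_assoc, ← hH0]
  have hQY0 : (1 - H0) * Y0 = 0 := by
    rw [Matrix.sub_mul, Matrix.one_mul, hH0Y0, sub_self]
  have hQH0 : (1 - H0) * H0 = 0 := by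
    rw [Matrix.sub_mul, Matrix.one_mul, hH0H0, sub_self]
  have hQsym : (1 - H0)ᵀ = 1 - H0 := by
    rw [Matrix.transpose_sub, Matrix.transpose_one, hH0sym]
  have hQQ : (1 - H0) * (1 - H0) = 1 - H0 := by
    rw [Matrix.mul_sub, Matrix.mul_one, hQH0, sub_zero]
  have hQSt : (1 - H0) * St = St := by
    rw [hSt, ← Matrix.mul_assoc, hQQ]
  have hStQ : Stᵀ * (1 - H0) = Stᵀ := by
    conv_lhs => rw [← hQsym, ← Matrix.transpose_mul, hQSt]
  have hPStSt : PSt * St = St := by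
    rw [hPSt, Matrix.mul_assoc, Matrix.mul_assoc, hSi, Matrix.mul_one]
  have hPsym : PStᵀ = PSt := by
    rw [hPSt]
    simp [Matrix.transpose_mul, hSsymInv, Matrix.mul_assoc]
  have hPP : PSt * PSt = PSt := by
    conv_lhs => rw [hPSt]
    simp only [Matrix.mul_assoc]
    rw [cancelSt, ← Matrix.mul_assoc, ← hPSt]
  have hStP : Stᵀ * PSt = Stᵀ := by
    conv_lhs => rw [← hPsym, ← Matrix.transpose_mul, hPStSt]
  have hPQ : PSt * (1 - H0) = PSt := by
    conv_lhs => rw [hPSt]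
    simp only [Matrix.mul_assoc]
    rw [hStQ, ← Matrix.mul_assoc, ← hPSt]
  -- the projected response
  set e : Fin m → ℝ := (1 - H0) *ᵥ z with he0
  have he : e = St *ᵥ b2 + (1 - H0) *ᵥ ν := by
    rw [he0, hz]
    rw [Matrix.mulVec_add, Matrix.mulVec_add, Matrix.mulVec_mulVec, Matrix.mulVec_mulVec,
      hQY0, ← hSt]
    simp
  have hez : e = z - H0 *ᵥ z := by
    rw [he0, Matrix.sub_mulVec, Matrix.one_mulVec]
  -- RSS small
  have hdecS : ∀ γ1 : Fin d0 → ℝ,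
      (z - Y0 *ᵥ γ1) ⬝ᵥ (z - Y0 *ᵥ γ1)
        = e ⬝ᵥ e + (H0 *ᵥ z - Y0 *ᵥ γ1) ⬝ᵥ (H0 *ᵥ z - Y0 *ᵥ γ1) := by
    intro γ
    have hsplit : z - Y0 *ᵥ γ = e + (H0 *ᵥ z - Y0 *ᵥ γ) := by rw [hez]; abel
    have hcross : e ⬝ᵥ (H0 *ᵥ z - Y0 *ᵥ γ) = 0 := by
      rw [he0, shift2, hQsym, Matrix.mulVec_sub, Matrix.mulVec_mulVec, Matrix.mulVec_mulVec,
        hQH0, hQY0]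
      simp
    rw [hsplit, dot_expand, hcross]
    ring
  have hsmall : RSSsmall = e ⬝ᵥ e := by
    have hbdd : BddBelow (Set.range fun γ1 : Fin d0 → ℝ =>
        (z - Y0 *ᵥ γ1) ⬝ᵥ (z - Y0 *ᵥ γ1)) := by
      refine ⟨e ⬝ᵥ e, ?_⟩
      rintro x ⟨γ, rfl⟩
      dsimp only
      rw [hdecS γ]
      have := dsn (H0 *ᵥ z - Y0 *ᵥ γ); linarith
    apply le_antisymm
    · have hach : (z - Y0 *ᵥ ((Y0ᵀ * Y0)⁻¹ *ᵥ (Y0ᵀ *ᵥ z))) ⬝ᵥ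
          (z - Y0 *ᵥ ((Y0ᵀ * Y0)⁻¹ *ᵥ (Y0ᵀ *ᵥ z))) = e ⬝ᵥ e := by
        have hY : Y0 *ᵥ ((Y0ᵀ * Y0)⁻¹ *ᵥ (Y0ᵀ *ᵥ z)) = H0 *ᵥ z := by
          rw [Matrix.mulVec_mulVec, Matrix.mulVec_mulVec, ← hH0]
        rw [hY, ← hez]
      exact (ciInf_le hbdd ((Y0ᵀ * Y0)⁻¹ *ᵥ (Y0ᵀ *ᵥ z))).trans_eq hach
    · refine le_ciInf fun γ => ?_
      rw [hdecS γ]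
      have := dsn (H0 *ᵥ z - Y0 *ᵥ γ); linarith
  -- RSS large
  have hdecL : ∀ γ : (Fin d0 → ℝ) × (Fin d1 → ℝ),
      (z - Y0 *ᵥ γ.1 - S *ᵥ γ.2) ⬝ᵥ (z - Y0 *ᵥ γ.1 - S *ᵥ γ.2)
        = (e - PSt *ᵥ e) ⬝ᵥ (e - PSt *ᵥ e)
          + (PSt *ᵥ e - St *ᵥ γ.2) ⬝ᵥ (PSt *ᵥ e - St *ᵥ γ.2)
          + (H0 *ᵥ (z - Y0 *ᵥ γ.1 - S *ᵥ γ.2)) ⬝ᵥ (H0 *ᵥ (z - Y0 *ᵥ γ.1 - S *ᵥ γ.2)) := by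
    intro γ
    set r : Fin m → ℝ := z - Y0 *ᵥ γ.1 - S *ᵥ γ.2 with hr
    have hQr : (1 - H0) *ᵥ r = e - St *ᵥ γ.2 := by
      rw [hr, Matrix.mulVec_sub, Matrix.mulVec_sub, Matrix.mulVec_mulVec, Matrix.mulVec_mulVec,
        hQY0, ← hSt, ← he0]
      simp
    have hsplit1 : r = (1 - H0) *ᵥ r + H0 *ᵥ r := by
      rw [Matrix.sub_mulVec, Matrix.one_mulVec]; abel
    have hcross1 : ((1 - H0) *ᵥ r) ⬝ᵥ (H0 *ᵥ r) = 0 := by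
      rw [shift2, hQsym, Matrix.mulVec_mulVec, hQH0]
      simp
    have step1 : r ⬝ᵥ r = ((1 - H0) *ᵥ r) ⬝ᵥ ((1 - H0) *ᵥ r) + (H0 *ᵥ r) ⬝ᵥ (H0 *ᵥ r) := by
      conv_lhs => rw [hsplit1]
      rw [dot_expand, hcross1]; ring
    have hsplit2 : e - St *ᵥ γ.2 = (e - PSt *ᵥ e) + (PSt *ᵥ e - St *ᵥ γ.2) := by abel
    have hcross2 : (e - PSt *ᵥ e) ⬝ᵥ (PSt *ᵥ e - St *ᵥ γ.2) = 0 := by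
      have h1 : e - PSt *ᵥ e = (1 - PSt) *ᵥ e := by
        rw [Matrix.sub_mulVec, Matrix.one_mulVec]
      rw [h1, shift2]
      have h2 : (1 - PSt)ᵀ = 1 - PSt := by
        rw [Matrix.transpose_sub, Matrix.transpose_one, hPsym]
      have hOP : (1 - PSt) * PSt = 0 := by
        rw [Matrix.sub_mul, Matrix.one_mul, hPP, sub_self]
      have hOSt : (1 - PSt) * St = 0 := by
        rw [Matrix.sub_mul, Matrix.one_mul, hPStSt, sub_self]
      rw [h2, Matrix.mulVec_sub, Matrix.mulVec_mulVec e (1 - PSt) PSt, hOP,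
        Matrix.mulVec_mulVec γ.2 (1 - PSt) St, hOSt]
      simp
    have step2 : ((1 - H0) *ᵥ r) ⬝ᵥ ((1 - H0) *ᵥ r)
        = (e - PSt *ᵥ e) ⬝ᵥ (e - PSt *ᵥ e)
          + (PSt *ᵥ e - St *ᵥ γ.2) ⬝ᵥ (PSt *ᵥ e - St *ᵥ γ.2) := by
      rw [hQr]
      conv_lhs => rw [hsplit2]
      rw [dot_expand, hcross2]; ring
    rw [step1, step2]
  have hlarge : RSSlarge = (e - PSt *ᵥ e) ⬝ᵥ (e - PSt *ᵥ e) := by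
    have hbdd : BddBelow (Set.range fun γ : (Fin d0 → ℝ) × (Fin d1 → ℝ) =>
        (z - Y0 *ᵥ γ.1 - S *ᵥ γ.2) ⬝ᵥ (z - Y0 *ᵥ γ.1 - S *ᵥ γ.2)) := by
      refine ⟨(e - PSt *ᵥ e) ⬝ᵥ (e - PSt *ᵥ e), ?_⟩
      rintro x ⟨γ, rfl⟩
      dsimp only
      rw [hdecL γ]
      have h1 := dsn (PSt *ᵥ e - St *ᵥ γ.2)
      have h2 := dsn (H0 *ᵥ (z - Y0 *ᵥ γ.1 - S *ᵥ γ.2))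
      linarith
    set γ2 : Fin d1 → ℝ := (Stᵀ * St)⁻¹ *ᵥ (Stᵀ *ᵥ e) with hγ2
    set γ1 : Fin d0 → ℝ := (Y0ᵀ * Y0)⁻¹ *ᵥ (Y0ᵀ *ᵥ (z - S *ᵥ γ2)) with hγ1
    have hStγ2 : St *ᵥ γ2 = PSt *ᵥ e := by
      rw [hγ2, Matrix.mulVec_mulVec, Matrix.mulVec_mulVec, ← hPSt]
    have hY0γ1 : Y0 *ᵥ γ1 = H0 *ᵥ (z - S *ᵥ γ2) := by
      rw [hγ1, Matrix.mulVec_mulVec, Matrix.mulVec_mulVec, ← hH0]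
    have hach : (z - Y0 *ᵥ γ1 - S *ᵥ γ2) ⬝ᵥ (z - Y0 *ᵥ γ1 - S *ᵥ γ2)
        = (e - PSt *ᵥ e) ⬝ᵥ (e - PSt *ᵥ e) := by
      rw [hdecL (γ1, γ2)]
      have hzero1 : PSt *ᵥ e - St *ᵥ (γ1, γ2).2 = 0 := by
        simp only
        rw [hStγ2, sub_self]
      have hzero2 : H0 *ᵥ (z - Y0 *ᵥ (γ1, γ2).1 - S *ᵥ (γ1, γ2).2) = 0 := by
        simp only
        rw [Matrix.mulVec_sub, Matrix.mulVec_sub, Matrix.mulVec_mulVec, hH0Y0, hY0γ1,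
          Matrix.mulVec_sub, Matrix.mulVec_mulVec]
        abel
      rw [hzero1, hzero2]
      simp
    apply le_antisymm
    · exact (ciInf_le hbdd (γ1, γ2)).trans_eq hach
    · refine le_ciInf fun γ => ?_
      rw [hdecL γ]
      have h1 := dsn (PSt *ᵥ e - St *ᵥ γ.2)
      have h2 := dsn (H0 *ᵥ (z - Y0 *ᵥ γ.1 - S *ᵥ γ.2))
      linarith
  -- the difference equals ‖PSt e‖²
  have hePe : e ⬝ᵥ (PSt *ᵥ e) = (PSt *ᵥ e) ⬝ᵥ (PSt *ᵥ e) := by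
    conv_lhs => rw [← hPP, ← Matrix.mulVec_mulVec, ← hPsym, ← shift2, hPsym]
  have hdiff : RSSsmall - RSSlarge = (PSt *ᵥ e) ⬝ᵥ (PSt *ᵥ e) := by
    rw [hsmall, hlarge]
    have : (e - PSt *ᵥ e) ⬝ᵥ (e - PSt *ᵥ e)
        = e ⬝ᵥ e - 2 * (e ⬝ᵥ (PSt *ᵥ e)) + (PSt *ᵥ e) ⬝ᵥ (PSt *ᵥ e) := by
      have h := dot_expand e (-(PSt *ᵥ e))
      simp only [← sub_eq_add_neg] at h
      rw [h]
      simp [dotProduct_neg, neg_dotProduct]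
      ring
    rw [this, hePe]; ring
  constructor
  · rw [hdiff, ← he]
  · intro lam hlam
    rw [hdiff, ← hePe, he]
    set a : Fin m → ℝ := St *ᵥ b2 with ha
    set c : Fin m → ℝ := (1 - H0) *ᵥ ν with hc
    have hPa : PSt *ᵥ a = a := by rw [ha, Matrix.mulVec_mulVec, hPStSt]
    have haa : a ⬝ᵥ a = b2 ⬝ᵥ ((Stᵀ * St) *ᵥ b2) := by
      rw [ha, shift2, Matrix.mulVec_mulVec]
    have haPc : a ⬝ᵥ (PSt *ᵥ c) = b2 ⬝ᵥ (Stᵀ *ᵥ c) := by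
      rw [ha, shift2, Matrix.mulVec_mulVec, hStP]
    have hca : c ⬝ᵥ a = b2 ⬝ᵥ (Stᵀ *ᵥ c) := by
      rw [dotProduct_comm, ha, shift2]
    have hcPc : 0 ≤ c ⬝ᵥ (PSt *ᵥ c) := by
      have : c ⬝ᵥ (PSt *ᵥ c) = (PSt *ᵥ c) ⬝ᵥ (PSt *ᵥ c) := by
        conv_lhs => rw [← hPP, ← Matrix.mulVec_mulVec, ← hPsym, ← shift2, hPsym]
      rw [this]; exact dsn _
    have hexp : (a + c) ⬝ᵥ (PSt *ᵥ (a + c))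
        = a ⬝ᵥ a + 2 * (b2 ⬝ᵥ (Stᵀ *ᵥ c)) + c ⬝ᵥ (PSt *ᵥ c) := by
      rw [Matrix.mulVec_add, hPa, add_dotProduct, dotProduct_add, dotProduct_add,
        haPc, hca]
      ring
    rw [hexp, haa]
    have := hlam b2
    linarith
end
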